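/- arXiv:2208.08546 — 2 statements merged into one kernel-verified Lean document; each statement's English description precedes it below -/
import Mathlib

section
/- Let φ = ∑_{k≥0} φ_k τ^k be a formal power series over ℂ and let ν ≥ 1 be an integer. Define inductively r₁ = ν and, for i = 1, …, g: k_i is the least natural number k such that φ_k ≠ 0 and r_i does not divide k (assumed to exist for each i ≤ g), and r_{i+1} = gcd(r_i, k_i). Fix 1 ≤ i ≤ g and let ξ ∈ ℂ satisfy ξ^{r_i} = 1 and ξ^{r_{i+1}} ≠ 1. Then the series φ(τ) − φ(ξτ) = ∑_{k≥0} φ_k (1 − ξ^k) τ^k is nonzero and its order (the least k with nonzero coefficient) equals k_i. -/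
/-- Let `φ = ∑ φ_k τ^k ∈ ℂ⟦τ⟧`, `ν ≥ 1`, and define `r₁ = ν`,
`k_i` the least `k` with `φ_k ≠ 0` and `r_i ∤ k`, and `r_{i+1} = gcd(r_i, k_i)`
(for `1 ≤ i ≤ g`).  If `1 ≤ i ≤ g` and `ξ ∈ ℂ` satisfies `ξ^{r_i} = 1` but
`ξ^{r_{i+1}} ≠ 1`, then the series `φ(τ) − φ(ξτ) = ∑ φ_k (1 − ξ^k) τ^k` is
nonzero and has order exactly `k_i`. -/
theorem stmt_4 (φ : PowerSeries ℂ) (ν : ℕ) (hν : 1 ≤ ν) (g : ℕ)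
    (r k : ℕ → ℕ) (hr1 : r 1 = ν)
    (hk : ∀ i, 1 ≤ i → i ≤ g →
      (PowerSeries.coeff (k i) φ ≠ 0 ∧ ¬ r i ∣ k i) ∧
      ∀ k' < k i, PowerSeries.coeff k' φ ≠ 0 → r i ∣ k')
    (hrsucc : ∀ i, 1 ≤ i → i ≤ g → r (i + 1) = Nat.gcd (r i) (k i))
    (i : ℕ) (hi1 : 1 ≤ i) (hig : i ≤ g)
    (ξ : ℂ) (hξ : ξ ^ r i = 1) (hξ' : ξ ^ r (i + 1) ≠ 1) :
    PowerSeries.mk (fun n => PowerSeries.coeff n φ * (1 - ξ ^ n)) ≠ 0 ∧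
    PowerSeries.order (PowerSeries.mk (fun n => PowerSeries.coeff n φ * (1 - ξ ^ n)))
      = (k i : ℕ∞) := by

  obtain ⟨⟨hφk, hndvd⟩, hmin⟩ := hk i hi1 hig
  have hξk : ξ ^ k i ≠ 1 := by
    intro h
    apply hξ'
    rw [hrsucc i hi1 hig]
    have h1 : orderOf ξ ∣ r i := orderOf_dvd_of_pow_eq_one hξ
    have h2 : orderOf ξ ∣ k i := orderOf_dvd_of_pow_eq_one h
    exact orderOf_dvd_iff_pow_eq_one.mp (Nat.dvd_gcd h1 h2)
  have hcoef : PowerSeries.coeff (k i)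
      (PowerSeries.mk (fun n => PowerSeries.coeff n φ * (1 - ξ ^ n))) ≠ 0 := by
    rw [PowerSeries.coeff_mk]
    exact mul_ne_zero hφk (sub_ne_zero.mpr (fun h => hξk h.symm))
  have hlow : ∀ j < k i, PowerSeries.coeff j
      (PowerSeries.mk (fun n => PowerSeries.coeff n φ * (1 - ξ ^ n))) = 0 := by
    intro j hj
    rw [PowerSeries.coeff_mk]
    by_cases hφj : PowerSeries.coeff j φ = 0
    · rw [hφj, zero_mul]
    · have := hmin j hj hφj
      obtain ⟨c, rfl⟩ := this
      rw [pow_mul, hξ, one_pow, sub_self, mul_zero]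
  constructor
  · intro h
    exact hcoef (by rw [h, map_zero])
  · exact PowerSeries.order_eq_nat.mpr ⟨hcoef, hlow⟩
end

section
/- Let m, p, q be positive real numbers and set t₀ = q/(p+q). For t ∈ (0,1) define F_x(t) = m(1−t)/min(pt, q(1−t)) and F_y(t) = mt/min(pt, q(1−t)). Then F_x(t₀) = m/q, F_y(t₀) = m/p, and for every t ∈ (0,1) one has F_x(t₀) ≤ F_x(t) and F_y(t₀) ≤ F_y(t). -/
/-- For positive reals `m, p, q` and `t₀ = q/(p+q)`, the functions
`F_x(t) = m(1−t)/min(pt, q(1−t))` and `F_y(t) = mt/min(pt, q(1−t))` on `(0,1)`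
satisfy `F_x(t₀) = m/q`, `F_y(t₀) = m/p`, and both attain their minimum over
`(0,1)` at `t₀`. -/
theorem stmt_7 (m p q : ℝ) (hm : 0 < m) (hp : 0 < p) (hq : 0 < q) :
    let t₀ : ℝ := q / (p + q)
    let Fx : ℝ → ℝ := fun t => m * (1 - t) / min (p * t) (q * (1 - t))
    let Fy : ℝ → ℝ := fun t => m * t / min (p * t) (q * (1 - t))
    Fx t₀ = m / q ∧ Fy t₀ = m / p ∧
      ∀ t ∈ Set.Ioo (0 : ℝ) 1, Fx t₀ ≤ Fx t ∧ Fy t₀ ≤ Fy t := by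
  intro t₀ Fx Fy
  have hpq : 0 < p + q := by linarith
  have heq : p * t₀ = q * (1 - t₀) := by
    show p * (q / (p + q)) = q * (1 - q / (p + q))
    field_simp
    ring
  have h1t : 1 - t₀ = p / (p + q) := by
    show 1 - q / (p + q) = p / (p + q)
    field_simp
    ring
  have hFx : Fx t₀ = m / q := by
    show m * (1 - t₀) / min (p * t₀) (q * (1 - t₀)) = m / q
    rw [heq, min_self, h1t]
    field_simp
  have hFy : Fy t₀ = m / p := by
    show m * t₀ / min (p * t₀) (q * (1 - t₀)) = m / p
    rw [heq, min_self, h1t]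
    show m * (q / (p + q)) / (q * (p / (p + q))) = m / p
    field_simp
  refine ⟨hFx, hFy, fun t ht => ?_⟩
  obtain ⟨ht0, ht1⟩ := ht
  have hpt : 0 < p * t := mul_pos hp ht0
  have hqt : 0 < q * (1 - t) := mul_pos hq (by linarith)
  have hmin : 0 < min (p * t) (q * (1 - t)) := lt_min hpt hqt
  constructor
  · rw [hFx]
    show m / q ≤ m * (1 - t) / min (p * t) (q * (1 - t))
    calc m / q = m * (1 - t) / (q * (1 - t)) := by
          rw [mul_div_mul_right _ _ (by linarith : (1:ℝ) - t ≠ 0)]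
      _ ≤ m * (1 - t) / min (p * t) (q * (1 - t)) :=
          div_le_div_of_nonneg_left (mul_nonneg hm.le (by linarith)) hmin (min_le_right _ _)
  · rw [hFy]
    show m / p ≤ m * t / min (p * t) (q * (1 - t))
    calc m / p = m * t / (p * t) := by
          rw [mul_div_mul_right _ _ (ne_of_gt ht0)]
      _ ≤ m * t / min (p * t) (q * (1 - t)) :=
          div_le_div_of_nonneg_left (by positivity) hmin (min_le_left _ _)
end
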